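/- Let R be a right σ-reversible ring satisfying condition (C_σ) with σ(1) = 1, and δ a σ-derivation. If R is a quasi-Baer ring, then the Ore extension R[x;σ,δ] is a quasi-Baer ring. -/

import Mathlib

open Finset

/-- δ is a σ-derivation: δ(ab) = σ(a)δ(b) + δ(a)b. -/
def IsSigmaDerivation {R : Type*} [Ring R] (σ : R →+* R) (δ : R →+ R) : Prop :=
  ∀ a b : R, δ (a * b) = σ a * δ b + δ a * b

/-- `S` together with `ι : R →+* S` and `X : S` is the Ore extension `R[x;σ,δ]`:
`X·a = σ(a)·X + δ(a)`, every element is a polynomial in `X` with coefficients from `R`,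
and such representations have unique coefficients. -/
structure IsOreExtension {R S : Type*} [Ring R] [Ring S] (σ : R →+* R) (δ : R →+ R)
    (ι : R →+* S) (X : S) : Prop where
  commute : ∀ a : R, X * ι a = ι (σ a) * X + ι (δ a)
  span : ∀ s : S, ∃ (n : ℕ) (c : ℕ → R), s = ∑ i ∈ Finset.range (n + 1), ι (c i) * X ^ i
  indep : ∀ (n : ℕ) (c : ℕ → R),
    (∑ i ∈ Finset.range (n + 1), ι (c i) * X ^ i) = 0 → ∀ i ≤ n, c i = 0

/-- `R` is (σ,δ)-skew Armendariz: `fg = 0` implies `aᵢxⁱ·bⱼxʲ = 0` for all coefficients. -/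
def SkewArmendarizSD {R S : Type*} [Ring R] [Ring S] (ι : R →+* S) (X : S) : Prop :=
  ∀ (n m : ℕ) (a b : ℕ → R),
    (∑ i ∈ Finset.range (n + 1), ι (a i) * X ^ i) *
        (∑ j ∈ Finset.range (m + 1), ι (b j) * X ^ j) = 0 →
      ∀ i ≤ n, ∀ j ≤ m, (ι (a i) * X ^ i) * (ι (b j) * X ^ j) = 0

/-- Condition (C_σ): `a·σ(b) = 0` implies `a·b = 0`. -/
def CondC {R : Type*} [Ring R] (σ : R →+* R) : Prop :=
  ∀ a b : R, a * σ b = 0 → a * b = 0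

/-- Right annihilator of a subset. -/
def rightAnn {S : Type*} [Ring S] (A : Set S) : Set S := {c | ∀ x ∈ A, x * c = 0}

/-- A subset is a right ideal. -/
def IsRightIdealSet {S : Type*} [Ring S] (I : Set S) : Prop :=
  0 ∈ I ∧ (∀ a ∈ I, ∀ b ∈ I, a + b ∈ I) ∧ (∀ a ∈ I, ∀ r : S, a * r ∈ I)

/-- A ring is quasi-Baer: the right annihilator of every right ideal equals eS for an
idempotent e. -/
def IsQuasiBaerRing (S : Type*) [Ring S] : Prop :=
  ∀ I : Set S, IsRightIdealSet I →
    ∃ e : S, e * e = e ∧ rightAnn I = {y | ∃ r : S, y = e * r}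

section Aux
variable {R : Type*} [Ring R]

lemma aux_rev (σ : R →+* R) (hrev : ∀ a b : R, a * b = 0 → b * σ a = 0)
    (hC : CondC σ) : ∀ a b : R, a * b = 0 → b * a = 0 :=
  fun a b h => hC b a (hrev a b h)

lemma aux_semicomm (σ : R →+* R) (hrev : ∀ a b : R, a * b = 0 → b * σ a = 0)
    (hC : CondC σ) : ∀ a b r : R, a * b = 0 → a * r * b = 0 := by
  intro a b r h
  have h1 : b * a = 0 := aux_rev σ hrev hC a b h
  have h2 : b * (a * r) = 0 := by rw [← mul_assoc, h1, zero_mul]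
  exact aux_rev σ hrev hC b (a * r) h2

lemma aux_reduced (σ : R →+* R) (hrev : ∀ a b : R, a * b = 0 → b * σ a = 0)
    (hC : CondC σ) (hQB : IsQuasiBaerRing R) : ∀ a : R, a * a = 0 → a = 0 := by
  intro a h
  obtain ⟨e, he, hEq⟩ := hQB {y | ∃ r, y = a * r}
    ⟨⟨0, (mul_zero a).symm⟩,
     fun x ⟨r1, hx⟩ y ⟨r2, hy⟩ => ⟨r1 + r2, by rw [hx, hy, mul_add]⟩,
     fun x ⟨r1, hx⟩ r => ⟨r1 * r, by rw [hx, mul_assoc]⟩⟩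
  have ha : a ∈ rightAnn {y | ∃ r, y = a * r} := by
    rintro x ⟨r, rfl⟩
    exact aux_semicomm σ hrev hC a a r h
  rw [hEq] at ha
  obtain ⟨r0, hr0⟩ := ha
  have hee : e ∈ rightAnn {y | ∃ r : R, y = a * r} := by
    rw [hEq]; exact ⟨1, (mul_one e).symm⟩
  have hae : a * e = 0 := by
    have := hee a ⟨1, (mul_one a).symm⟩
    exact this
  -- e * x = e * x * e for all x
  have hid : ∀ x : R, e * x = e * x * e := by
    intro x
    have h1 : e * (1 - e) = 0 := by rw [mul_sub, mul_one, he, sub_self]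
    have h2 : e * x * (1 - e) = 0 := aux_semicomm σ hrev hC e (1 - e) x h1
    rw [mul_sub, mul_one] at h2
    exact sub_eq_zero.mp h2
  have : a = a * e := by rw [hr0]; exact hid r0
  rw [this, hae]

lemma aux_uvv (hred : ∀ x : R, x * x = 0 → x = 0) (u v : R)
    (h : u * v * v = 0) : u * v = 0 := by
  have h1 : (v * u * v) * (v * u * v) = 0 := by
    have : (v * u * v) * (v * u * v) = v * ((u * v * v) * (u * v)) := by noncomm_ring
    rw [this, h, zero_mul, mul_zero]
  have h2 := hred _ h1
  have h3 : (u * v) * (u * v) = 0 := by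
    have : (u * v) * (u * v) = u * (v * u * v) := by noncomm_ring
    rw [this, h2, mul_zero]
  exact hred _ h3

lemma aux_scomp (σ : R →+* R) (hrev : ∀ a b : R, a * b = 0 → b * σ a = 0)
    (hC : CondC σ) (a b : R) (h : a * b = 0) : a * σ b = 0 :=
  hrev b a (aux_rev σ hrev hC a b h)

lemma aux_dcomp (σ : R →+* R) (δ : R →+ R) (hδ : IsSigmaDerivation σ δ)
    (hrev : ∀ a b : R, a * b = 0 → b * σ a = 0) (hC : CondC σ)
    (hred : ∀ x : R, x * x = 0 → x = 0) (a b : R) (h : a * b = 0) : a * δ b = 0 := by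
  have hba : b * a = 0 := aux_rev σ hrev hC a b h
  have h1 : σ b * δ a + δ b * a = 0 := by
    have := hδ b a
    rw [hba, map_zero] at this
    exact this.symm
  have h2 : a * σ b = 0 := hrev b a hba
  have h3 : a * δ b * a = 0 := by
    have := congrArg (fun x => a * x) h1
    simp only [mul_add, mul_zero] at this
    rw [← mul_assoc, h2, zero_mul, zero_add, ← mul_assoc] at this
    exact this
  have h4 : (a * δ b) * (a * δ b) = 0 := by
    have he : (a * δ b) * (a * δ b) = ((a * δ b) * a) * δ b := by noncomm_ring
    rw [he, h3, zero_mul]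
  exact hred _ h4

lemma aux_scomp_iter (σ : R →+* R) (hrev : ∀ a b : R, a * b = 0 → b * σ a = 0)
    (hC : CondC σ) (a b : R) (h : a * b = 0) : ∀ i, a * (⇑σ)^[i] b = 0 := by
  intro i
  induction i with
  | zero => exact h
  | succ i ih =>
    rw [Function.iterate_succ_apply']
    exact aux_scomp σ hrev hC a _ ih

lemma aux_hC_iter (σ : R →+* R) (hC : CondC σ) (a b : R) :
    ∀ i, a * (⇑σ)^[i] b = 0 → a * b = 0 := by
  intro i
  induction i with
  | zero => exact fun h => h
  | succ i ih =>
    intro h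
    rw [Function.iterate_succ_apply'] at h
    exact ih (hC a _ h)

end Aux



section OreT
variable {R : Type*} [Ring R]

def OreT (σ : R →+* R) (δ : R →+ R) : ℕ → ℕ → R → R
  | 0, 0, b => b
  | 0, _+1, _ => 0
  | i+1, 0, b => δ (OreT σ δ i 0 b)
  | i+1, k+1, b => σ (OreT σ δ i k b) + δ (OreT σ δ i (k+1) b)

variable (σ : R →+* R) (δ : R →+ R)

lemma OreT_gt : ∀ i k, i < k → ∀ b : R, OreT σ δ i k b = 0 := by
  intro i
  induction i with
  | zero =>
    intro k hk b
    match k, hk with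
    | k+1, _ => rfl
  | succ i ih =>
    intro k hk b
    match k, hk with
    | k+1, hk =>
      show σ (OreT σ δ i k b) + δ (OreT σ δ i (k+1) b) = 0
      rw [ih k (by omega) b, ih (k+1) (by omega) b, map_zero, map_zero, add_zero]

lemma OreT_diag : ∀ i (b : R), OreT σ δ i i b = (⇑σ)^[i] b := by
  intro i
  induction i with
  | zero => intro b; rfl
  | succ i ih =>
    intro b
    show σ (OreT σ δ i i b) + δ (OreT σ δ i (i+1) b) = _
    rw [ih b, OreT_gt σ δ i (i+1) (by omega) b, map_zero, add_zero,
      Function.iterate_succ_apply']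

lemma OreT_compat (hsc : ∀ a b : R, a * b = 0 → a * σ b = 0)
    (hdc : ∀ a b : R, a * b = 0 → a * δ b = 0)
    (a b : R) (h : a * b = 0) : ∀ i k, a * OreT σ δ i k b = 0 := by
  intro i
  induction i with
  | zero =>
    intro k
    match k with
    | 0 => exact h
    | k+1 => exact mul_zero a
  | succ i ih =>
    intro k
    match k with
    | 0 => exact hdc _ _ (ih 0)
    | k+1 =>
      show a * (σ (OreT σ δ i k b) + δ (OreT σ δ i (k+1) b)) = 0
      rw [mul_add, hsc _ _ (ih k), hdc _ _ (ih (k+1)), add_zero]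

variable {S : Type*} [Ring S] (ι : R →+* S) (X : S)

lemma aux_Xpow_mul (hOre : IsOreExtension σ δ ι X) :
    ∀ (i : ℕ) (b : R), X ^ i * ι b = ∑ k ∈ range (i+1), ι (OreT σ δ i k b) * X ^ k := by
  intro i
  induction i with
  | zero =>
    intro b
    simp [OreT]
  | succ i ih =>
    intro b
    have step : ∀ (c : R) (k : ℕ),
        X * (ι c * X ^ k) = ι (σ c) * X ^ (k+1) + ι (δ c) * X ^ k := by
      intro c k
      rw [← mul_assoc, hOre.commute c, add_mul, mul_assoc, ← pow_succ']
    rw [pow_succ', mul_assoc, ih b, mul_sum]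
    rw [sum_congr rfl (fun k _ => step (OreT σ δ i k b) k), sum_add_distrib]
    -- RHS: peel off k = 0
    rw [sum_range_succ' (fun k => ι (OreT σ δ (i+1) k b) * X ^ k) (i+1)]
    have e0 : ι (OreT σ δ (i+1) 0 b) * X ^ 0 = ι (δ (OreT σ δ i 0 b)) * X ^ 0 := rfl
    have e1 : ∀ k, ι (OreT σ δ (i+1) (k+1) b) * X ^ (k+1)
        = ι (σ (OreT σ δ i k b)) * X ^ (k+1) + ι (δ (OreT σ δ i (k+1) b)) * X ^ (k+1) := by
      intro k
      show ι (σ (OreT σ δ i k b) + δ (OreT σ δ i (k+1) b)) * X ^ (k+1) = _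
      rw [map_add, add_mul]
    rw [sum_congr rfl (fun k _ => e1 k), sum_add_distrib, e0]
    -- second sums: Σ_{k∈range(i+1)} ι(δ(T i (k+1) b)) X^{k+1} + ι(δ(T i 0 b)) X^0
    --   = Σ_{k∈range(i+2)} ι(δ(T i k b)) X^k restricted... equals Σ_{k∈range(i+1)} ι(δ(T i k b)) X^k
    have e2 : (∑ k ∈ range (i+1), ι (δ (OreT σ δ i (k+1) b)) * X ^ (k+1))
        + ι (δ (OreT σ δ i 0 b)) * X ^ 0
        = ∑ k ∈ range (i+1), ι (δ (OreT σ δ i k b)) * X ^ k := by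
      rw [← sum_range_succ' (fun k => ι (δ (OreT σ δ i k b)) * X ^ k) (i+1),
        sum_range_succ]
      rw [OreT_gt σ δ i (i+1) (by omega) b, map_zero, map_zero, zero_mul, add_zero]
    rw [add_assoc, e2]
end OreT

section Prod
variable {R S : Type*} [Ring R] [Ring S] (σ : R →+* R) (δ : R →+ R)
  (ι : R →+* S) (X : S)

lemma aux_prod_eq (hOre : IsOreExtension σ δ ι X) (n m : ℕ) (a b : ℕ → R) :
    (∑ i ∈ range (n+1), ι (a i) * X ^ i) * (∑ j ∈ range (m+1), ι (b j) * X ^ j)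
      = ∑ d ∈ range (n+m+1), ι (∑ i ∈ range (n+1), ∑ j ∈ range (m+1), ∑ k ∈ range (i+1),
          if k + j = d then a i * OreT σ δ i k (b j) else 0) * X ^ d := by
  have lhs_eq : (∑ i ∈ range (n+1), ι (a i) * X ^ i) * (∑ j ∈ range (m+1), ι (b j) * X ^ j)
      = ∑ i ∈ range (n+1), ∑ j ∈ range (m+1), ∑ k ∈ range (i+1),
          ι (a i * OreT σ δ i k (b j)) * X ^ (k + j) := by
    rw [sum_mul_sum]
    apply sum_congr rfl; intro i _
    apply sum_congr rfl; intro j _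
    have h1 : (ι (a i) * X ^ i) * (ι (b j) * X ^ j)
        = ι (a i) * (X ^ i * ι (b j)) * X ^ j := by noncomm_ring
    rw [h1, aux_Xpow_mul σ δ ι X hOre i (b j), mul_sum, sum_mul]
    apply sum_congr rfl; intro k _
    rw [← mul_assoc, ← map_mul, mul_assoc, ← pow_add]
  rw [lhs_eq]
  symm
  simp only [map_sum, sum_mul]
  simp only [apply_ite ι, map_zero, ite_mul, zero_mul]
  rw [sum_comm]
  apply sum_congr rfl; intro i hi
  rw [sum_comm]
  apply sum_congr rfl; intro j hj
  rw [sum_comm]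
  apply sum_congr rfl; intro k hk
  rw [Finset.sum_ite_eq (range (n+m+1)) (k+j)
    (fun d => ι (a i * OreT σ δ i k (b j)) * X ^ d)]
  rw [if_pos]
  rw [mem_range] at hi hj hk
  rw [mem_range]
  omega
end Prod

section Core
variable {R S : Type*} [Ring R] [Ring S] (σ : R →+* R) (δ : R →+ R)
  (ι : R →+* S) (X : S)

lemma aux_armCore (hδ : IsSigmaDerivation σ δ) (hOre : IsOreExtension σ δ ι X)
    (hrev : ∀ a b : R, a * b = 0 → b * σ a = 0) (hC : CondC σ)
    (hQB : IsQuasiBaerRing R) (n m : ℕ) (a b : ℕ → R)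
    (h : (∑ i ∈ range (n+1), ι (a i) * X ^ i) * (∑ j ∈ range (m+1), ι (b j) * X ^ j) = 0) :
    ∀ i ≤ n, ∀ j ≤ m, a i * b j = 0 := by
  have hred := aux_reduced σ hrev hC hQB
  have hsc : ∀ a b : R, a * b = 0 → a * σ b = 0 := fun a b h => aux_scomp σ hrev hC a b h
  have hdc : ∀ a b : R, a * b = 0 → a * δ b = 0 :=
    fun a b h => aux_dcomp σ δ hδ hrev hC hred a b h
  set N := n + m with hN
  set a' : ℕ → R := fun i => if i ≤ n then a i else 0 with ha'
  set b' : ℕ → R := fun j => if j ≤ m then b j else 0 with hb'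
  have hf : (∑ i ∈ range (n+1), ι (a i) * X ^ i) = ∑ i ∈ range (N+1), ι (a' i) * X ^ i := by
    rw [show (∑ i ∈ range (n+1), ι (a i) * X ^ i)
        = ∑ i ∈ range (n+1), ι (a' i) * X ^ i from
      sum_congr rfl (fun i hi => by
        rw [mem_range] at hi
        rw [ha']; simp only []; rw [if_pos (by omega)])]
    apply sum_subset (by rw [range_subset_range]; omega)
    intro i _ hi
    rw [mem_range] at hi
    rw [ha']; simp only []; rw [if_neg (by omega), map_zero, zero_mul]
  have hg : (∑ j ∈ range (m+1), ι (b j) * X ^ j) = ∑ j ∈ range (N+1), ι (b' j) * X ^ j := by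
    rw [show (∑ j ∈ range (m+1), ι (b j) * X ^ j)
        = ∑ j ∈ range (m+1), ι (b' j) * X ^ j from
      sum_congr rfl (fun j hj => by
        rw [mem_range] at hj
        rw [hb']; simp only []; rw [if_pos (by omega)])]
    apply sum_subset (by rw [range_subset_range]; omega)
    intro j _ hj
    rw [mem_range] at hj
    rw [hb']; simp only []; rw [if_neg (by omega), map_zero, zero_mul]
  rw [hf, hg, aux_prod_eq σ δ ι X hOre N N a' b'] at h
  have hcoef := hOre.indep (N + N) _ h
  have key : ∀ t, ∀ i j : ℕ, N + N + 1 ≤ i + j + t → a' i * b' j = 0 := by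
    intro t
    induction t with
    | zero =>
      intro i j hij
      rcases le_or_gt i n with hi | hi
      · have hb0 : b' j = 0 := by rw [hb']; simp only []; rw [if_neg (by omega)]
        rw [hb0, mul_zero]
      · have ha0 : a' i = 0 := by rw [ha']; simp only []; rw [if_neg (by omega)]
        rw [ha0, zero_mul]
    | succ t ih =>
      intro i j hij
      rcases Nat.lt_or_ge (i + j + t) (N + N + 1) with hlt | hge
      swap
      · exact ih i j hge
      have outIH : ∀ p q : ℕ, i + j + 1 ≤ p + q → a' p * b' q = 0 := by
        intro p q hpq; exact ih p q (by omega)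
      set d := i + j with hd
      have hCd := hcoef d (by omega)
      have Ecd : (∑ p ∈ range (N+1), ∑ q ∈ range (N+1), ∑ k ∈ range (p+1),
            if k + q = d then a' p * OreT σ δ p k (b' q) else 0)
          = ∑ p ∈ range (N+1), ∑ q ∈ range (N+1),
            (if p + q = d then a' p * (⇑σ)^[p] (b' q) else 0) := by
        apply sum_congr rfl; intro p _
        apply sum_congr rfl; intro q _
        have hz : ∀ k ∈ range p,
            (if k + q = d then a' p * OreT σ δ p k (b' q) else 0) = 0 := by
          intro k hk
          rw [mem_range] at hk
          by_cases hkq : k + q = d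
          · rw [if_pos hkq]
            have h1 : a' p * b' q = 0 := outIH p q (by omega)
            exact OreT_compat σ δ hsc hdc _ _ h1 p k
          · rw [if_neg hkq]
        rw [sum_range_succ, sum_eq_zero hz, zero_add, OreT_diag]
      have E : (∑ p ∈ range (N+1), ∑ q ∈ range (N+1),
          (if p + q = d then a' p * (⇑σ)^[p] (b' q) else 0)) = 0 := Ecd ▸ hCd
      have inner : ∀ p, ∀ q, p + q = d → a' p * b' q = 0 := by
        intro p
        induction p using Nat.strong_induction_on with
        | _ p innerIH =>
        intro q hpq
        by_cases hpn : p ≤ n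
        swap
        · have ha0 : a' p = 0 := by rw [ha']; simp only []; rw [if_neg hpn]
          rw [ha0, zero_mul]
        by_cases hqm : q ≤ m
        swap
        · have hb0 : b' q = 0 := by rw [hb']; simp only []; rw [if_neg hqm]
          rw [hb0, mul_zero]
        have hE2 : (∑ p' ∈ range (N+1), ∑ q' ∈ range (N+1),
            (if p' + q' = d then a' p' * (⇑σ)^[p'] (b' q') else 0)) * ((⇑σ)^[p] (b' q)) = 0 := by
          rw [E, zero_mul]
        rw [sum_mul] at hE2
        have houter : ∀ p' ∈ range (N+1), p' ≠ p →
            (∑ q' ∈ range (N+1),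
              (if p' + q' = d then a' p' * (⇑σ)^[p'] (b' q') else 0)) * ((⇑σ)^[p] (b' q)) = 0 := by
          intro p' _ hne
          rw [sum_mul]
          apply sum_eq_zero
          intro q' _
          by_cases hc : p' + q' = d
          · rw [if_pos hc]
            rcases lt_or_gt_of_ne hne with hltp | hgtp
            · have h1 : a' p' * b' q' = 0 := innerIH p' hltp q' hc
              rw [aux_scomp_iter σ hrev hC _ _ h1 p', zero_mul]
            · have h1 : a' p' * b' q = 0 := outIH p' q (by omega)
              have h2 : a' p' * (⇑σ)^[p] (b' q) = 0 := aux_scomp_iter σ hrev hC _ _ h1 p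
              exact aux_semicomm σ hrev hC _ _ _ h2
          · rw [if_neg hc, zero_mul]
        rw [Finset.sum_eq_single_of_mem p (mem_range.mpr (by omega)) houter] at hE2
        have hinnerq : ∀ q' ∈ range (N+1), q' ≠ q →
            (if p + q' = d then a' p * (⇑σ)^[p] (b' q') else 0) = 0 := by
          intro q' _ hne
          rw [if_neg (by omega)]
        rw [Finset.sum_eq_single_of_mem q (mem_range.mpr (by omega)) hinnerq,
          if_pos hpq] at hE2
        have huv : a' p * (⇑σ)^[p] (b' q) = 0 := aux_uvv hred _ _ hE2
        exact aux_hC_iter σ hC (a' p) (b' q) p huv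
      exact inner i j rfl
  intro i hi j hj
  have hk := key (N + N + 1) i j (by omega)
  have hai : a' i = a i := by rw [ha']; simp only []; rw [if_pos hi]
  have hbj : b' j = b j := by rw [hb']; simp only []; rw [if_pos hj]
  rw [hai, hbj] at hk
  exact hk
end Core


/-- If R is right σ-reversible, satisfies (C_σ) and is quasi-Baer, then R[x;σ,δ] is
quasi-Baer. -/
theorem stmt15 {R S : Type*} [Ring R] [Ring S] (σ : R →+* R) (δ : R →+ R)
    (hδ : IsSigmaDerivation σ δ) (ι : R →+* S) (X : S)
    (hOre : IsOreExtension σ δ ι X)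
    (hrev : ∀ a b : R, a * b = 0 → b * σ a = 0) (hC : CondC σ)
    (hQB : IsQuasiBaerRing R) : IsQuasiBaerRing S := by
  intro I hI
  have hred := aux_reduced σ hrev hC hQB
  have hsc : ∀ a b : R, a * b = 0 → a * σ b = 0 := fun a b h => aux_scomp σ hrev hC a b h
  have hdc : ∀ a b : R, a * b = 0 → a * δ b = 0 :=
    fun a b h => aux_dcomp σ δ hδ hrev hC hred a b h
  set A : Set R := {r | ∃ (nn : ℕ) (c : ℕ → R) (i : ℕ), i ≤ nn ∧ r = c i ∧
    (∑ k ∈ range (nn+1), ι (c k) * X ^ k) ∈ I} with hA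
  set J : Set R := {r | ∀ u : R, (∀ a ∈ A, a * u = 0) → r * u = 0} with hJ
  have hJideal : IsRightIdealSet J := by
    refine ⟨fun u _ => zero_mul u,
      fun p hp q hq u hu => by rw [add_mul, hp u hu, hq u hu, add_zero],
      fun p hp r u hu => ?_⟩
    have h1 : p * (r * u) = 0 := hp (r * u)
      (fun a ha => by rw [← mul_assoc]; exact aux_semicomm σ hrev hC a u r (hu a ha))
    rw [mul_assoc]; exact h1
  obtain ⟨e, he, hEq⟩ := hQB J hJideal
  have hAJ : A ⊆ J := fun a ha u hu => hu a ha
  have heJ : e ∈ rightAnn J := by rw [hEq]; exact ⟨1, (mul_one e).symm⟩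
  have heA : ∀ a ∈ A, a * e = 0 := fun a ha => heJ a (hAJ ha)
  refine ⟨ι e, by rw [← map_mul, he], ?_⟩
  have hfe : ∀ f ∈ I, f * ι e = 0 := by
    intro f hf
    obtain ⟨nn, c, rfl⟩ := hOre.span f
    rw [sum_mul]
    apply sum_eq_zero
    intro i hi
    rw [mem_range] at hi
    have hc : c i * e = 0 := heA (c i) ⟨nn, c, i, by omega, rfl, hf⟩
    rw [mul_assoc, aux_Xpow_mul σ δ ι X hOre i e, mul_sum]
    apply sum_eq_zero
    intro k _
    rw [← mul_assoc, ← map_mul, OreT_compat σ δ hsc hdc _ _ hc i k, map_zero, zero_mul]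
  apply Set.ext; intro g
  constructor
  · intro hg
    obtain ⟨mm, b, rfl⟩ := hOre.span g
    have hbj : ∀ j, j ≤ mm → ∃ r : R, b j = e * r := by
      intro j hj
      have hbJ : b j ∈ rightAnn J := by
        intro rr hrr
        apply hrr (b j)
        intro aa haa
        obtain ⟨nn, c, i, hin, rfl, hfI⟩ := haa
        have hfg : (∑ k ∈ range (nn+1), ι (c k) * X ^ k) *
            (∑ j ∈ range (mm+1), ι (b j) * X ^ j) = 0 := hg _ hfI
        exact aux_armCore σ δ ι X hδ hOre hrev hC hQB nn mm c b hfg i hin j hj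
      rw [hEq] at hbJ
      exact hbJ
    refine ⟨∑ j ∈ range (mm+1),
      ι (if h : j ≤ mm then Classical.choose (hbj j h) else 0) * X ^ j, ?_⟩
    rw [mul_sum]
    apply sum_congr rfl
    intro j hjm
    rw [mem_range] at hjm
    have hj' : j ≤ mm := by omega
    rw [← mul_assoc, ← map_mul, dif_pos hj']
    exact congrArg (fun z => ι z * X ^ j) (Classical.choose_spec (hbj j hj'))
  · rintro ⟨r, rfl⟩ f hf
    rw [← mul_assoc, hfe f hf, zero_mul]
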